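/- (Block similarity bound.) For blocks x, x₁⁺,…,x_b⁺ i.i.d. from D_{c⁺} and x₁⁻,…,x_b⁻ i.i.d. from D_{c⁻} with c⁺, c⁻ ∼ ρ², define the block unsupervised loss L_un^{block}(f) = E[ℓ(f(x)ᵀ((1/b)Σ_i f(x_i⁺) − (1/b)Σ_i f(x_i⁻)))]. If ℓ is convex, then L_un^{block}(f) ≤ L_un(f), where L_un(f) = E[ℓ(f(x)ᵀ(f(x₁⁺) − f(x₁⁻)))] is the pairwise unsupervised loss. -/

import Mathlib

set_option maxHeartbeats 1000000


open MeasureTheory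
open scoped RealInnerProductSpace BigOperators

section Aux

variable {α : Type*} [MeasurableSpace α]

lemma aux_pi_map_eval {ι : Type*} [Fintype ι] (μ : Measure α) [IsProbabilityMeasure μ] (i : ι) :
    (Measure.pi fun _ : ι => μ).map (Function.eval i) = μ := by
  classical
  ext s hs
  rw [Measure.map_apply (measurable_pi_apply i) hs]
  have h : Function.eval i ⁻¹' s =
      Set.pi Set.univ (Function.update (fun _ : ι => (Set.univ : Set α)) i s) := by
    rw [Set.eval_preimage]
  rw [h, Measure.pi_pi]
  rw [Finset.prod_eq_single i]
  · simp
  · intro j _ hj; simp [Function.update_of_ne hj]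
  · simp

lemma aux_integral_eval {ι : Type*} [Fintype ι] (μ : Measure α) [IsProbabilityMeasure μ] (i : ι)
    (g : α → ℝ) (hg : AEStronglyMeasurable g μ) :
    ∫ y : ι → α, g (y i) ∂(Measure.pi fun _ : ι => μ) = ∫ z, g z ∂μ := by
  have h := aux_pi_map_eval (ι := ι) μ i
  conv_rhs => rw [← h]
  exact (integral_map (measurable_pi_apply i).aemeasurable (by rwa [h])).symm

lemma aux_integrable {μ : Measure α} [IsFiniteMeasure μ] {g : α → ℝ}
    (hg : AEStronglyMeasurable g μ) {M : ℝ} (h : ∀ a, |g a| ≤ M) : Integrable g μ :=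
  ⟨hg, HasFiniteIntegral.of_bounded (C := M) (ae_of_all _ fun a => by simpa using h a)⟩

lemma aux_abs_integral_le (μ : Measure α) [IsProbabilityMeasure μ]
    {g : α → ℝ} {M : ℝ} (h : ∀ a, |g a| ≤ M) : |∫ a, g a ∂μ| ≤ M := by
  rw [← Real.norm_eq_abs]
  have := norm_integral_le_of_norm_le_const (μ := μ) (f := g) (C := M)
    (ae_of_all _ fun a => by rw [Real.norm_eq_abs]; exact h a)
  simpa using this

end Aux

/-- Block similarity bound: the block contrastive loss, which averages `b` positive and
`b` negative representations inside the loss, is at most the pairwise unsupervised loss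
when `ℓ` is convex. -/
theorem block_loss_le_pairwise_loss
    {X : Type*} [MeasurableSpace X] {C : Type*} [Fintype C] {d : ℕ}
    (ρ : C → ℝ) (hρ0 : ∀ c, 0 ≤ ρ c) (hρ1 : ∑ c, ρ c = 1)
    (D : C → Measure X) [hD : ∀ c, IsProbabilityMeasure (D c)]
    (f : X → EuclideanSpace ℝ (Fin d)) (hfm : Measurable f)
    (R : ℝ) (hfb : ∀ x, ‖f x‖ ≤ R)
    (ℓ : ℝ → ℝ) (hℓ : ConvexOn ℝ Set.univ ℓ) (hℓc : Continuous ℓ)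
    (b : ℕ) (hb : 0 < b) :
    ∑ cp, ∑ cm, ρ cp * ρ cm *
        ∫ x, ∫ xp : Fin b → X, ∫ xm : Fin b → X,
          ℓ ⟪f x, (b : ℝ)⁻¹ • ∑ i, f (xp i) - (b : ℝ)⁻¹ • ∑ i, f (xm i)⟫
          ∂(Measure.pi fun _ => D cm) ∂(Measure.pi fun _ => D cp) ∂(D cp)
    ≤ ∑ cp, ∑ cm, ρ cp * ρ cm *
        ∫ x, ∫ xp, ∫ xm, ℓ ⟪f x, f xp - f xm⟫ ∂(D cm) ∂(D cp) ∂(D cp) := by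
  classical
  rcases isEmpty_or_nonempty C with hC | hC
  · simp
  have hX : Nonempty X := by
    by_contra h
    rw [not_nonempty_iff] at h
    have h1 := (hD (Classical.arbitrary C)).measure_univ
    rw [Set.univ_eq_empty_iff.2 h, measure_empty] at h1
    exact zero_ne_one h1
  have hbR : (0 : ℝ) < (b : ℝ) := by exact_mod_cast hb
  have hR : 0 ≤ R := le_trans (norm_nonneg _) (hfb (Classical.arbitrary X))
  set B : ℝ := R * (R + R) with hB
  obtain ⟨M, hM⟩ :=
    (isCompact_Icc (a := -B) (b := B)).exists_bound_of_continuousOn hℓc.continuousOn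
  have hMt : ∀ t : ℝ, |t| ≤ B → |ℓ t| ≤ M := fun t ht => by
    simpa [Real.norm_eq_abs] using hM t (Set.mem_Icc.2 (abs_le.1 ht))
  -- norm of averaged block representation
  have hwnorm : ∀ v : Fin b → X, ‖(b : ℝ)⁻¹ • ∑ i, f (v i)‖ ≤ R := by
    intro v
    rw [norm_smul, Real.norm_eq_abs, abs_of_nonneg (by positivity : (0:ℝ) ≤ (b:ℝ)⁻¹)]
    have h1 : ‖∑ i, f (v i)‖ ≤ (b : ℝ) * R := by
      refine (norm_sum_le _ _).trans ?_
      calc ∑ i : Fin b, ‖f (v i)‖ ≤ ∑ _i : Fin b, R := Finset.sum_le_sum fun i _ => hfb _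
        _ = (b : ℝ) * R := by simp [mul_comm]
    calc (b:ℝ)⁻¹ * ‖∑ i, f (v i)‖ ≤ (b:ℝ)⁻¹ * ((b:ℝ) * R) :=
          mul_le_mul_of_nonneg_left h1 (by positivity)
      _ = R := by field_simp
  have hipair : ∀ v w₁ w₂ : EuclideanSpace ℝ (Fin d),
      ‖v‖ ≤ R → ‖w₁‖ ≤ R → ‖w₂‖ ≤ R → |⟪v, w₁ - w₂⟫| ≤ B := by
    intro v w₁ w₂ hv h1 h2
    calc |⟪v, w₁ - w₂⟫| ≤ ‖v‖ * ‖w₁ - w₂‖ := abs_real_inner_le_norm _ _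
      _ ≤ R * (R + R) :=
          mul_le_mul hv ((norm_sub_le _ _).trans (add_le_add h1 h2)) (norm_nonneg _) hR
  have hMpair : ∀ x y z : X, |ℓ ⟪f x, f y - f z⟫| ≤ M := fun x y z =>
    hMt _ (hipair _ _ _ (hfb x) (hfb y) (hfb z))
  have hMblock : ∀ (x : X) (xp xm : Fin b → X),
      |ℓ ⟪f x, (b:ℝ)⁻¹ • ∑ i, f (xp i) - (b:ℝ)⁻¹ • ∑ i, f (xm i)⟫| ≤ M := fun x xp xm =>
    hMt _ (hipair _ _ _ (hfb x) (hwnorm xp) (hwnorm xm))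
  -- measurability facts
  have hsum : Measurable fun v : Fin b → X => (b:ℝ)⁻¹ • ∑ i, f (v i) :=
    (Finset.measurable_sum Finset.univ fun i _ => (hfm.comp (measurable_pi_apply i) :
      Measurable fun v : Fin b → X => f (v i))).const_smul ((b:ℝ)⁻¹)
  have hFb : Measurable fun p : (X × (Fin b → X)) × (Fin b → X) =>
      ℓ ⟪f p.1.1, (b:ℝ)⁻¹ • ∑ i, f (p.1.2 i) - (b:ℝ)⁻¹ • ∑ i, f (p.2 i)⟫ :=
    hℓc.measurable.comp ((hfm.comp (measurable_fst.comp measurable_fst)).inner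
      ((hsum.comp (measurable_snd.comp measurable_fst)).sub (hsum.comp measurable_snd)))
  have hFp : Measurable fun p : (X × X) × X => ℓ ⟪f p.1.1, f p.1.2 - f p.2⟫ :=
    hℓc.measurable.comp ((hfm.comp (measurable_fst.comp measurable_fst)).inner
      ((hfm.comp (measurable_snd.comp measurable_fst)).sub (hfm.comp measurable_snd)))
  refine Finset.sum_le_sum fun cp _ => Finset.sum_le_sum fun cm _ => ?_
  haveI := hD cp
  haveI := hD cm
  refine mul_le_mul_of_nonneg_left ?_ (mul_nonneg (hρ0 cp) (hρ0 cm))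
  set μ : Measure X := D cp with hμ
  set ν : Measure X := D cm with hν
  set Pp : Measure (Fin b → X) := Measure.pi fun _ => μ with hPp
  set Pm : Measure (Fin b → X) := Measure.pi fun _ => ν with hPm
  -- pairwise inner integral as a function of y (for fixed x)
  have hHsm : ∀ x : X, StronglyMeasurable fun y : X => ∫ z, ℓ ⟪f x, f y - f z⟫ ∂ν := by
    intro x
    have : Measurable fun p : X × X => ℓ ⟪f x, f p.1 - f p.2⟫ :=
      (hFp.comp (((measurable_const (a := x)).prodMk measurable_fst).prodMk measurable_snd) :)
    exact this.stronglyMeasurable.integral_prod_right' (ν := ν)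
  have hHbd : ∀ x y : X, |∫ z, ℓ ⟪f x, f y - f z⟫ ∂ν| ≤ M := fun x y =>
    aux_abs_integral_le ν (fun z => hMpair x y z)
  -- the pairwise loss for fixed x
  have hIpair_sm : StronglyMeasurable fun x : X => ∫ y, ∫ z, ℓ ⟪f x, f y - f z⟫ ∂ν ∂μ := by
    have : StronglyMeasurable fun p : X × X => ∫ z, ℓ ⟪f p.1, f p.2 - f z⟫ ∂ν :=
      hFp.stronglyMeasurable.integral_prod_right' (ν := ν)
    exact this.integral_prod_right' (ν := μ)
  have hIpair_bd : ∀ x : X, |∫ y, ∫ z, ℓ ⟪f x, f y - f z⟫ ∂ν ∂μ| ≤ M := fun x =>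
    aux_abs_integral_le μ (fun y => hHbd x y)
  -- the block loss for fixed x
  have hIblock_sm : StronglyMeasurable fun x : X =>
      ∫ xp, ∫ xm, ℓ ⟪f x, (b:ℝ)⁻¹ • ∑ i, f (xp i) - (b:ℝ)⁻¹ • ∑ i, f (xm i)⟫ ∂Pm ∂Pp := by
    have h1 : StronglyMeasurable fun q : X × (Fin b → X) =>
        ∫ xm, ℓ ⟪f q.1, (b:ℝ)⁻¹ • ∑ i, f (q.2 i) - (b:ℝ)⁻¹ • ∑ i, f (xm i)⟫ ∂Pm :=
      hFb.stronglyMeasurable.integral_prod_right' (ν := Pm)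
    exact h1.integral_prod_right' (ν := Pp)
  have hIblock_bd : ∀ x : X,
      |∫ xp, ∫ xm, ℓ ⟪f x, (b:ℝ)⁻¹ • ∑ i, f (xp i) - (b:ℝ)⁻¹ • ∑ i, f (xm i)⟫ ∂Pm ∂Pp| ≤ M :=
    fun x => aux_abs_integral_le Pp fun xp =>
      aux_abs_integral_le Pm fun xm => hMblock x xp xm
  refine integral_mono
    (aux_integrable hIblock_sm.aestronglyMeasurable hIblock_bd)
    (aux_integrable hIpair_sm.aestronglyMeasurable hIpair_bd) ?_
  intro x
  -- pointwise (in x) inequality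
  have jensen : ∀ (xp xm : Fin b → X),
      ℓ ⟪f x, (b:ℝ)⁻¹ • ∑ i, f (xp i) - (b:ℝ)⁻¹ • ∑ i, f (xm i)⟫ ≤
        ∑ i, (b:ℝ)⁻¹ * ℓ ⟪f x, f (xp i) - f (xm i)⟫ := by
    intro xp xm
    have hsum1 : ∑ _i : Fin b, (b:ℝ)⁻¹ = 1 := by
      rw [Finset.sum_const, Finset.card_univ, Fintype.card_fin, nsmul_eq_mul]
      field_simp
    have harg : ⟪f x, (b:ℝ)⁻¹ • ∑ i, f (xp i) - (b:ℝ)⁻¹ • ∑ i, f (xm i)⟫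
        = ∑ i : Fin b, (b:ℝ)⁻¹ • ⟪f x, f (xp i) - f (xm i)⟫ := by
      simp only [inner_sub_right, real_inner_smul_right, inner_sum, smul_eq_mul,
        Finset.mul_sum, ← Finset.sum_sub_distrib, mul_sub]
    rw [harg]
    have := hℓ.map_sum_le (t := Finset.univ) (w := fun _ : Fin b => (b:ℝ)⁻¹)
      (p := fun i => ⟪f x, f (xp i) - f (xm i)⟫)
      (fun _ _ => by positivity) hsum1 (fun _ _ => Set.mem_univ _)
    simpa [smul_eq_mul] using this
  -- per-xp comparison of inner integrals
  have hmeas_xm : ∀ xp : Fin b → X, Measurable fun xm : Fin b → X =>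
      ℓ ⟪f x, (b:ℝ)⁻¹ • ∑ i, f (xp i) - (b:ℝ)⁻¹ • ∑ i, f (xm i)⟫ := fun xp =>
    (hFb.comp (((measurable_const (a := x)).prodMk (measurable_const (a := xp))).prodMk measurable_id) :)
  have hmeas_term : ∀ (xp : Fin b → X) (i : Fin b), Measurable fun xm : Fin b → X =>
      (b:ℝ)⁻¹ * ℓ ⟪f x, f (xp i) - f (xm i)⟫ := by
    intro xp i
    exact (hℓc.measurable.comp ((measurable_const (a := f x)).inner
      (measurable_const.sub (hfm.comp (measurable_pi_apply i))))).const_mul _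
  have step1 : ∀ xp : Fin b → X,
      (∫ xm, ℓ ⟪f x, (b:ℝ)⁻¹ • ∑ i, f (xp i) - (b:ℝ)⁻¹ • ∑ i, f (xm i)⟫ ∂Pm)
        ≤ ∑ i : Fin b, (b:ℝ)⁻¹ * ∫ z, ℓ ⟪f x, f (xp i) - f z⟫ ∂ν := by
    intro xp
    have hInt1 : Integrable (fun xm : Fin b → X =>
        ℓ ⟪f x, (b:ℝ)⁻¹ • ∑ i, f (xp i) - (b:ℝ)⁻¹ • ∑ i, f (xm i)⟫) Pm :=
      aux_integrable (hmeas_xm xp).aestronglyMeasurable (fun xm => hMblock x xp xm)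
    have hInt2 : ∀ i : Fin b, Integrable (fun xm : Fin b → X =>
        (b:ℝ)⁻¹ * ℓ ⟪f x, f (xp i) - f (xm i)⟫) Pm := fun i =>
      aux_integrable (hmeas_term xp i).aestronglyMeasurable
        (M := (b:ℝ)⁻¹ * M) (fun xm => by
          rw [abs_mul, abs_of_nonneg (by positivity : (0:ℝ) ≤ (b:ℝ)⁻¹)]
          exact mul_le_mul_of_nonneg_left (hMpair x (xp i) (xm i)) (by positivity))
    calc (∫ xm, ℓ ⟪f x, (b:ℝ)⁻¹ • ∑ i, f (xp i) - (b:ℝ)⁻¹ • ∑ i, f (xm i)⟫ ∂Pm)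
        ≤ ∫ xm, ∑ i : Fin b, (b:ℝ)⁻¹ * ℓ ⟪f x, f (xp i) - f (xm i)⟫ ∂Pm :=
          integral_mono hInt1 (integrable_finset_sum _ fun i _ => hInt2 i) (fun xm => jensen xp xm)
      _ = ∑ i : Fin b, ∫ xm, (b:ℝ)⁻¹ * ℓ ⟪f x, f (xp i) - f (xm i)⟫ ∂Pm :=
          integral_finset_sum _ (fun i _ => hInt2 i)
      _ = ∑ i : Fin b, (b:ℝ)⁻¹ * ∫ z, ℓ ⟪f x, f (xp i) - f z⟫ ∂ν := by
          refine Finset.sum_congr rfl fun i _ => ?_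
          rw [integral_const_mul]
          congr 1
          exact aux_integral_eval ν i (fun z => ℓ ⟪f x, f (xp i) - f z⟫)
            (hℓc.measurable.comp ((measurable_const (a := f x)).inner
              (measurable_const.sub hfm))).aestronglyMeasurable
  -- integrate over xp
  have hsm_block_xp : StronglyMeasurable fun xp : Fin b → X =>
      ∫ xm, ℓ ⟪f x, (b:ℝ)⁻¹ • ∑ i, f (xp i) - (b:ℝ)⁻¹ • ∑ i, f (xm i)⟫ ∂Pm := by
    have : Measurable fun p : (Fin b → X) × (Fin b → X) =>
        ℓ ⟪f x, (b:ℝ)⁻¹ • ∑ i, f (p.1 i) - (b:ℝ)⁻¹ • ∑ i, f (p.2 i)⟫ :=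
      (hFb.comp (((measurable_const (a := x)).prodMk measurable_fst).prodMk measurable_snd) :)
    exact this.stronglyMeasurable.integral_prod_right' (ν := Pm)
  have hInt_term_xp : ∀ i : Fin b, Integrable (fun xp : Fin b → X =>
      (b:ℝ)⁻¹ * ∫ z, ℓ ⟪f x, f (xp i) - f z⟫ ∂ν) Pp := by
    intro i
    refine aux_integrable ?_ (M := (b:ℝ)⁻¹ * M) (fun xp => ?_)
    · exact (((hHsm x).comp_measurable (measurable_pi_apply i)).const_smul
        ((b:ℝ)⁻¹)).aestronglyMeasurable
    · rw [abs_mul, abs_of_nonneg (by positivity : (0:ℝ) ≤ (b:ℝ)⁻¹)]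
      exact mul_le_mul_of_nonneg_left (hHbd x (xp i)) (by positivity)
  calc (∫ xp, ∫ xm, ℓ ⟪f x, (b:ℝ)⁻¹ • ∑ i, f (xp i) - (b:ℝ)⁻¹ • ∑ i, f (xm i)⟫ ∂Pm ∂Pp)
      ≤ ∫ xp, ∑ i : Fin b, (b:ℝ)⁻¹ * ∫ z, ℓ ⟪f x, f (xp i) - f z⟫ ∂ν ∂Pp := by
        refine integral_mono
          (aux_integrable hsm_block_xp.aestronglyMeasurable
            (fun xp => aux_abs_integral_le Pm fun xm => hMblock x xp xm))
          (integrable_finset_sum _ fun i _ => hInt_term_xp i) step1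
    _ = ∑ i : Fin b, ∫ xp, (b:ℝ)⁻¹ * ∫ z, ℓ ⟪f x, f (xp i) - f z⟫ ∂ν ∂Pp :=
        integral_finset_sum _ (fun i _ => hInt_term_xp i)
    _ = ∑ i : Fin b, (b:ℝ)⁻¹ * ∫ y, ∫ z, ℓ ⟪f x, f y - f z⟫ ∂ν ∂μ := by
        refine Finset.sum_congr rfl fun i _ => ?_
        rw [integral_const_mul]
        congr 1
        exact aux_integral_eval μ i (fun y => ∫ z, ℓ ⟪f x, f y - f z⟫ ∂ν)
          (hHsm x).aestronglyMeasurable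
    _ = ∫ y, ∫ z, ℓ ⟪f x, f y - f z⟫ ∂ν ∂μ := by
        rw [Finset.sum_const, Finset.card_univ, Fintype.card_fin, nsmul_eq_mul]
        field_simp
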